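/- In the EBA model where each item x has a single unique aspect χ_x with utility u(χ_x) = e^{v(x)} for a utility function v, the choice probability from any finite choice set C with |C| ≥ 2 equals the MNL probability: P(x | C) = e^{v(x)} / ∑_{y∈C} e^{v(y)}. -/
import Mathlib


open Classical in
/-- In the EBA model where every item `x` has a single unique aspect `χ x` with
utility `exp (v x)`, the choice probability from any choice set of size ≥ 2
is the MNL (softmax) probability.  The EBA model is given abstractly by a
probability function `P` satisfying the EBA recursion. -/
theorem eba_singleton_aspects_is_mnl
    {U A : Type*} [DecidableEq U] [DecidableEq A]
    (asp : U → Finset A)     -- aspect set of each item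
    (u : A → ℝ)              -- aspect utilities
    (P : U → Finset U → ℝ)   -- EBA choice probabilities
    -- the EBA recursion, eq. (3): nontrivial case
    (hrec : ∀ (D : Finset U) (x : U), x ∈ D →
      D.sup asp ≠ (D.sup asp).filter (fun χ => ∀ y ∈ D, χ ∈ asp y) →
      P x D =
        (∑ χ ∈ asp x \ (D.sup asp).filter (fun χ => ∀ y ∈ D, χ ∈ asp y),
            u χ * P x (D.filter (fun y => χ ∈ asp y))) /
        ∑ ψ ∈ D.sup asp \ (D.sup asp).filter (fun χ => ∀ y ∈ D, χ ∈ asp y), u ψ)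
    -- the EBA recursion: degenerate (uniform) case
    (huni : ∀ (D : Finset U) (x : U), x ∈ D →
      D.sup asp = (D.sup asp).filter (fun χ => ∀ y ∈ D, χ ∈ asp y) →
      P x D = 1 / D.card)
    -- each item has a single unique aspect with exp-utility given by `v`
    (χ : U → A) (hχ : Function.Injective χ)
    (hasp : ∀ x, asp x = {χ x})
    (v : U → ℝ) (hu : ∀ x, u (χ x) = Real.exp (v x)) :
    ∀ (C : Finset U), 2 ≤ C.card → ∀ x ∈ C,
      P x C = Real.exp (v x) / ∑ y ∈ C, Real.exp (v y) := by
  intro C hC x hx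
  -- membership in the sup of aspect sets
  have hsup_mem : ∀ {a : A}, a ∈ C.sup asp ↔ ∃ y ∈ C, a = χ y := by
    intro a
    constructor
    · intro h
      rcases Finset.mem_sup.mp h with ⟨y, hy, ha⟩
      exact ⟨y, hy, by simpa [hasp] using ha⟩
    · rintro ⟨y, hy, rfl⟩
      exact Finset.mem_sup.mpr ⟨y, hy, by simp [hasp]⟩
  -- the common-aspect set is empty
  have hfilter : (C.sup asp).filter (fun a => ∀ y ∈ C, a ∈ asp y) = ∅ := by
    apply Finset.filter_false_of_mem
    intro a ha hall
    rcases hsup_mem.mp ha with ⟨y, hy, rfl⟩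
    obtain ⟨z, hz, hzy⟩ : ∃ z ∈ C, z ≠ y := by
      rcases Finset.one_lt_card.mp hC with ⟨p, hp, q, hq, hpq⟩
      by_cases h : p = y
      · exact ⟨q, hq, by rw [← h]; exact fun e => hpq e.symm⟩
      · exact ⟨p, hp, h⟩
    have := hall z hz
    rw [hasp] at this
    exact hzy (hχ (Finset.mem_singleton.mp this)).symm
  have hne : C.sup asp ≠ (C.sup asp).filter (fun a => ∀ y ∈ C, a ∈ asp y) := by
    rw [hfilter]
    intro h
    have : χ x ∈ C.sup asp := hsup_mem.mpr ⟨x, hx, rfl⟩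
    simp [h] at this
  have key := hrec C x hx hne
  rw [hfilter] at key
  simp only [Finset.sdiff_empty] at key
  -- the filtered set for aspect χ x is {x}
  have hCx : C.filter (fun y => χ x ∈ asp y) = {x} := by
    ext z
    simp only [Finset.mem_filter, Finset.mem_singleton, hasp]
    constructor
    · rintro ⟨hz, hmem⟩
      exact (hχ hmem).symm
    · rintro rfl
      exact ⟨hx, rfl⟩
  -- P x {x} = 1
  have hPx1 : P x ({x} : Finset U) = 1 := by
    have h1 : ({x} : Finset U).sup asp =
        (({x} : Finset U).sup asp).filter (fun a => ∀ y ∈ ({x} : Finset U), a ∈ asp y) := by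
      ext a
      simp [Finset.mem_filter]
    have := huni {x} x (Finset.mem_singleton_self x) h1
    simpa using this
  -- numerator
  have hnum : (∑ a ∈ asp x, u a * P x (C.filter (fun y => a ∈ asp y)))
      = Real.exp (v x) := by
    rw [hasp]
    simp [hCx, hPx1, hu]
  -- denominator: sup asp = image of χ
  have hsupimg : C.sup asp = C.image χ := by
    ext a
    simp [hsup_mem, eq_comm]
  have hden : (∑ ψ ∈ C.sup asp, u ψ) = ∑ y ∈ C, Real.exp (v y) := by
    rw [hsupimg, Finset.sum_image (fun a _ b _ h => hχ h)]
    exact Finset.sum_congr rfl fun y _ => hu y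
  rw [key, hnum, hden]
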